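/- arXiv:2509.18203 — 4 statements merged into one kernel-verified Lean document; each statement's English description precedes it below -/
import Mathlib

section
/- Fix dimension d ≥ 2 and size n ≥ 1, and let G be the d-dimensional lattice graph with D = {x ∈ ℤ^d : 1 ≤ x_i ≤ n for all i} and ∂D = {p ∈ ℤ^d : min_{q ∈ D} ‖p − q‖_{ℓ¹} = 1}. Define the diagonal slices L_t = {x ∈ D : Σ x_i = t}, L_t^S = ∪_{ℓ ≤ t} L_ℓ, K_t = {x ∈ ∂D : Σ x_i = t}, K_t^− = {x ∈ K_t : min_i x_i = 0}, K_t^+ = {x ∈ K_t : max_i x_i = n+1}, and J_t^S = K_t^{S−} ∪ K_{t+1}^{S+} where K_t^{S±} = ∪_{ℓ ≤ t} K_ℓ^±. Then for d ≤ t ≤ dn, any function u : L_t^S ∪ J_t^S → ℝ satisfying Δ_γ u = 0 on L_{t−1}^S, u = 0 on J_{t−1}^S, and having zero boundary current D_γ u = 0 on J_{t−1}^S, must be identically zero on L_t^S. -/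
noncomputable section
open Classical Finset

namespace DiscreteCalderon

/-- Vertices of the ambient lattice `ℤ^d`. -/
abbrev V (d : ℕ) := Fin d → ℤ

/-- Interior vertex set `D = {x : 1 ≤ x_i ≤ n}`. -/
def Dset (d n : ℕ) : Set (V d) := {x | ∀ i, 1 ≤ x i ∧ x i ≤ (n : ℤ)}

/-- ℓ¹ distance. -/
def dist1 {d : ℕ} (p q : V d) : ℤ := ∑ i, |p i - q i|

/-- Boundary vertex set `∂D`: vertices at ℓ¹ distance 1 from `D`. -/
def Bset (d n : ℕ) : Set (V d) := {p | p ∉ Dset d n ∧ ∃ q ∈ Dset d n, dist1 p q = 1}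

/-- All vertices of the graph, `D ∪ ∂D`. -/
def Vset (d n : ℕ) : Set (V d) := Dset d n ∪ Bset d n

/-- Adjacency of the lattice graph: ℓ¹ distance 1, both endpoints vertices,
not both on the boundary. -/
def Adj (d n : ℕ) (p q : V d) : Prop :=
  dist1 p q = 1 ∧ p ∈ Vset d n ∧ q ∈ Vset d n ∧ (p ∈ Dset d n ∨ q ∈ Dset d n)

/-- A finite box containing all vertices. -/
def box (d n : ℕ) : Finset (V d) :=
  Fintype.piFinset (fun _ : Fin d => Finset.Icc (0 : ℤ) ((n : ℤ) + 1))

/-- Neighbours of `p` in the graph, as a finite set. -/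
def nbr (d n : ℕ) (p : V d) : Finset (V d) := (box d n).filter (fun q => Adj d n p q)

/-- Interior neighbours of `p`. -/
def nbrD (d n : ℕ) (p : V d) : Finset (V d) := (nbr d n p).filter (fun q => q ∈ Dset d n)

/-- The discrete (weighted) Laplacian `(Δ_γ u)_p = ∑_{q∈N(p)} γ_{qp}(u_q - u_p)`. -/
def lap (d n : ℕ) (γ : V d → V d → ℝ) (u : V d → ℝ) (p : V d) : ℝ :=
  ∑ q ∈ nbr d n p, γ q p * (u q - u p)

/-- The boundary current `(D_γ u)_p = ∑_{q∈N(p)∩D} γ_{pq}(u_q - u_p)`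
(there is exactly one interior neighbour of a boundary node). -/
def cur (d n : ℕ) (γ : V d → V d → ℝ) (u : V d → ℝ) (p : V d) : ℝ :=
  ∑ q ∈ nbrD d n p, γ p q * (u q - u p)

/-- A strictly positive symmetric conductivity. -/
def GoodCond (d n : ℕ) (γ : V d → V d → ℝ) : Prop :=
  (∀ p q, γ p q = γ q p) ∧ ∀ p q, Adj d n p q → 0 < γ p q

/-- The coordinate sum of a lattice point. -/
def sum1 {d : ℕ} (x : V d) : ℤ := ∑ i, x i

/-- Interior diagonal slice `L_t`. -/
def L (d n : ℕ) (t : ℤ) : Set (V d) := {x | x ∈ Dset d n ∧ sum1 x = t}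

/-- `L_t^S = ∪_{ℓ ≤ t} L_ℓ`. -/
def LS (d n : ℕ) (t : ℤ) : Set (V d) := {x | x ∈ Dset d n ∧ sum1 x ≤ t}

/-- Boundary diagonal slice `K_t`. -/
def K (d n : ℕ) (t : ℤ) : Set (V d) := {x | x ∈ Bset d n ∧ sum1 x = t}

/-- `K_t^- = {x ∈ K_t : min_i x_i = 0}`. -/
def Km (d n : ℕ) (t : ℤ) : Set (V d) := {x | x ∈ K d n t ∧ ∃ i, x i = 0}

/-- `K_t^+ = {x ∈ K_t : max_i x_i = n+1}`. -/
def Kp (d n : ℕ) (t : ℤ) : Set (V d) := {x | x ∈ K d n t ∧ ∃ i, x i = (n : ℤ) + 1}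

/-- `K_t^{S-} = ∪_{ℓ ≤ t} K_ℓ^-`. -/
def KSm (d n : ℕ) (t : ℤ) : Set (V d) := {x | x ∈ Bset d n ∧ sum1 x ≤ t ∧ ∃ i, x i = 0}

/-- `K_t^{S+} = ∪_{ℓ ≤ t} K_ℓ^+`. -/
def KSp (d n : ℕ) (t : ℤ) : Set (V d) := {x | x ∈ Bset d n ∧ sum1 x ≤ t ∧ ∃ i, x i = (n : ℤ) + 1}

/-- The lower boundary region `J_t^S = K_t^{S-} ∪ K_{t+1}^{S+}`. -/
def JS (d n : ℕ) (t : ℤ) : Set (V d) := KSm d n t ∪ KSp d n (t + 1)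

/-- `J_t = K_t^- ∪ K_{t+1}^+`. -/
def Jslice (d n : ℕ) (t : ℤ) : Set (V d) := Km d n t ∪ Kp d n (t + 1)

/-- `u` is the γ-harmonic extension of boundary data `φ` (zero-extension convention
outside `D ∪ ∂D`). -/
def IsSol (d n : ℕ) (γ : V d → V d → ℝ) (φ u : V d → ℝ) : Prop :=
  (∀ p, p ∉ Vset d n → u p = 0) ∧
  (∀ p ∈ Dset d n, lap d n γ u p = 0) ∧
  (∀ p ∈ Bset d n, u p = φ p)

/-- The Laplacian row vector `v_p`. -/
def vrow (d n : ℕ) (γ : V d → V d → ℝ) (p : V d) : V d → ℝ := fun q =>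
  if Adj d n p q then γ p q
  else if q = p then -(∑ r ∈ nbr d n p, γ p r) else 0

/-- Restriction of a function to a set (zero outside). -/
def rst {d : ℕ} (S : Set (V d)) (f : V d → ℝ) : V d → ℝ := fun q => if q ∈ S then f q else 0

/-- Euclidean inner product of (vertex-supported) functions. -/
def dot (d n : ℕ) (f g : V d → ℝ) : ℝ := ∑ p ∈ box d n, f p * g p

/-- The localized solution space `𝒰^{(t)}`: restrictions to `L_t^S ∪ J_t^S` of
harmonic extensions of boundary potentials in `ker T₁^{(t)}`. -/
def Uset (d n : ℕ) (γ : V d → V d → ℝ) (t : ℤ) : Set (V d → ℝ) :=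
  {u | (∀ p, p ∉ LS d n t ∪ JS d n t → u p = 0) ∧
    ∃ φ w : V d → ℝ, (∀ p, p ∉ JS d n t → φ p = 0) ∧ IsSol d n γ φ w ∧
      (∀ p ∈ L d n (t + 1), w p = 0) ∧ ∀ p ∈ LS d n t ∪ JS d n t, u p = w p}

/-- The set `E_t` of edges between the consecutive layers:
`E(K_t^-, L_{t+1}) ∪ E(L_t, K_{t+1}^+) ∪ E(L_t, L_{t+1})`. -/
def EdgeT (d n : ℕ) (t : ℤ) (p q : V d) : Prop :=
  Adj d n p q ∧
    ((p ∈ Km d n t ∧ q ∈ L d n (t + 1)) ∨ (q ∈ Km d n t ∧ p ∈ L d n (t + 1)) ∨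
     (p ∈ L d n t ∧ q ∈ Kp d n (t + 1)) ∨ (q ∈ L d n t ∧ p ∈ Kp d n (t + 1)) ∨
     (p ∈ L d n t ∧ q ∈ L d n (t + 1)) ∨ (q ∈ L d n t ∧ p ∈ L d n (t + 1)))

/-- The edge vector `J_p^u ∈ ℝ^{E_t}`, `J_p^u(pq) = u_p - u_q` on edges of `E_t`
incident to `p`, and `0` otherwise (as a symmetric function of edge endpoints). -/
def Jvec (d n : ℕ) (t : ℤ) (u : V d → ℝ) (p : V d) : V d → V d → ℝ := fun a b =>
  if EdgeT d n t a b then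
    (if a = p then u a - u b else if b = p then u b - u a else 0)
  else 0

/-- Inner product of edge functions. -/
def dotE (d n : ℕ) (f g : V d → V d → ℝ) : ℝ :=
  ∑ p ∈ box d n, ∑ q ∈ box d n, f p q * g p q

/-- Coordinate weight used in the induction measure. -/
private def wt (d : ℕ) (i : Fin d) : ℤ := (d : ℤ) - 1 - (i : ℤ)

private def Sw (d : ℕ) : ℤ := ∑ i, wt d i

private def mw (d : ℕ) (x : V d) : ℤ := ∑ i, wt d i * x i

/-- The induction measure. -/
private def mu (d n : ℕ) (x : V d) : ℤ :=
  (((n : ℤ) - 1) * Sw d + 1) * sum1 x - mw d x + (n : ℤ) * Sw d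

private lemma wt_nonneg (d : ℕ) (i : Fin d) : 0 ≤ wt d i := by
  have := i.isLt; unfold wt; omega

private lemma Sw_nonneg (d : ℕ) : 0 ≤ Sw d :=
  Finset.sum_nonneg fun i _ => wt_nonneg d i

private lemma dist1_cases {d : ℕ} {p q : V d} (h : dist1 p q = 1) :
    ∃ j, (∀ i, i ≠ j → q i = p i) ∧ (q j = p j + 1 ∨ q j = p j - 1) := by
  have hne : ∃ j, p j ≠ q j := by
    by_contra hc
    push_neg at hc
    have : dist1 p q = 0 := by
      unfold dist1; apply Finset.sum_eq_zero; intro i _; rw [hc i]; simp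
    omega
  obtain ⟨j, hj⟩ := hne
  unfold dist1 at h
  have hsplit : |p j - q j| + ∑ i ∈ Finset.univ.erase j, |p i - q i| = ∑ i, |p i - q i| :=
    Finset.add_sum_erase _ (fun i => |p i - q i|) (Finset.mem_univ j)
  have h1 : 1 ≤ |p j - q j| := Int.one_le_abs (by omega)
  have hrest0 : ∑ i ∈ Finset.univ.erase j, |p i - q i| = 0 := by
    have hnn : 0 ≤ ∑ i ∈ Finset.univ.erase j, |p i - q i| :=
      Finset.sum_nonneg fun i _ => abs_nonneg _
    omega
  have heach : ∀ i ∈ Finset.univ.erase j, |p i - q i| = 0 := by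
    intro i hi
    have := (Finset.sum_eq_zero_iff_of_nonneg (fun i _ => abs_nonneg (p i - q i))).mp hrest0
    exact this i hi
  refine ⟨j, fun i hi => ?_, ?_⟩
  · have h0 := abs_eq_zero.mp (heach i (Finset.mem_erase.mpr ⟨hi, Finset.mem_univ i⟩))
    omega
  · have habs : |p j - q j| = 1 := by omega
    rcases (abs_eq (by norm_num : (0:ℤ) ≤ 1)).mp habs with h2 | h2 <;> omega

private lemma sum_shift {d : ℕ} (c : Fin d → ℤ) {x q : V d} {j : Fin d}
    (h : ∀ i, i ≠ j → q i = x i) :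
    ∑ i, c i * q i = (∑ i, c i * x i) + c j * (q j - x j) := by
  have key : ∑ i, (c i * q i - c i * x i) = c j * q j - c j * x j := by
    apply Fintype.sum_eq_single
    intro i hi
    rw [h i hi]; ring
  rw [Finset.sum_sub_distrib] at key
  linarith [key]

private lemma sum1_shift {d : ℕ} {x q : V d} {j : Fin d} (h : ∀ i, i ≠ j → q i = x i) :
    sum1 q = sum1 x + (q j - x j) := by
  have := sum_shift (fun _ => (1:ℤ)) h
  simpa [sum1] using this

private lemma mw_shift {d : ℕ} {x q : V d} {j : Fin d} (h : ∀ i, i ≠ j → q i = x i) :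
    mw d q = mw d x + wt d j * (q j - x j) :=
  sum_shift (wt d) h

private lemma dist1_single {d : ℕ} {p q : V d} {j : Fin d} (h : ∀ i, i ≠ j → q i = p i)
    (hj : |p j - q j| = 1) : dist1 p q = 1 := by
  unfold dist1
  rw [Fintype.sum_eq_single j (fun i hi => by rw [h i hi]; simp)]
  exact hj

private lemma mem_box_of_D {d n : ℕ} {x : V d} (hx : x ∈ Dset d n) : x ∈ box d n := by
  rw [box, Fintype.mem_piFinset]
  intro i
  have := hx i
  simp only [Finset.mem_Icc]
  omega

private lemma mw_lb {d n : ℕ} {x : V d} (hx : x ∈ Dset d n) : Sw d ≤ mw d x := by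
  apply Finset.sum_le_sum
  intro i _
  have h1 := (hx i).1
  have h2 := wt_nonneg d i
  nlinarith

private lemma mw_ub {d n : ℕ} {x : V d} (hx : x ∈ Dset d n) : mw d x ≤ (n : ℤ) * Sw d := by
  have : ∀ i ∈ Finset.univ, wt d i * x i ≤ wt d i * (n : ℤ) := by
    intro i _
    have h1 := (hx i).2
    have h2 := wt_nonneg d i
    nlinarith
  calc mw d x ≤ ∑ i, wt d i * (n : ℤ) := Finset.sum_le_sum this
    _ = (n : ℤ) * Sw d := by
      rw [Sw, Finset.mul_sum]
      apply Finset.sum_congr rfl; intro i _; ring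

private lemma sum1_lb {d n : ℕ} {x : V d} (hx : x ∈ Dset d n) : (d : ℤ) ≤ sum1 x := by
  have : ∀ i ∈ (Finset.univ : Finset (Fin d)), (1:ℤ) ≤ x i := fun i _ => (hx i).1
  have h := Finset.sum_le_sum this
  simpa [sum1, Finset.card_univ] using h

private lemma mu_pos {d n : ℕ} (hd : 1 ≤ d) (hn : 1 ≤ n) {x : V d} (hx : x ∈ Dset d n) :
    1 ≤ mu d n x := by
  have h1 := mw_ub hx
  have h2 := sum1_lb hx
  have h3 := Sw_nonneg d
  have hn' : (1:ℤ) ≤ (n:ℤ) := by exact_mod_cast hn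
  have hd' : (1:ℤ) ≤ (d:ℤ) := by exact_mod_cast hd
  have hC : (1:ℤ) ≤ ((n : ℤ) - 1) * Sw d + 1 := by nlinarith
  unfold mu
  nlinarith

private lemma mu_slice {d n : ℕ} (hn : 1 ≤ n) {x y : V d} (hx : x ∈ Dset d n)
    (hy : y ∈ Dset d n) (hs : sum1 y < sum1 x) : mu d n y < mu d n x := by
  have h1 := mw_ub hx
  have h2 := mw_lb hy
  have h3 := Sw_nonneg d
  have hn' : (1:ℤ) ≤ (n:ℤ) := by exact_mod_cast hn
  have hC : (0:ℤ) ≤ ((n : ℤ) - 1) * Sw d := by nlinarith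
  have h4 : 0 ≤ (((n : ℤ) - 1) * Sw d + 1) * (sum1 x - sum1 y - 1) :=
    mul_nonneg (by nlinarith) (by omega)
  unfold mu
  nlinarith

private lemma mu_same {d n : ℕ} {x y : V d} (hs : sum1 y = sum1 x)
    (hm : mw d x < mw d y) : mu d n y < mu d n x := by
  unfold mu
  rw [hs]
  omega

/-- discrete unique continuation from Cauchy data on the lower
corner boundary `J_{t-1}^S`. -/
theorem stmt2 (d n : ℕ) (hd : 2 ≤ d) (hn : 1 ≤ n)
    (γ : V d → V d → ℝ) (hγ : GoodCond d n γ)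
    (t : ℤ) (ht1 : (d : ℤ) ≤ t) (ht2 : t ≤ (d : ℤ) * n)
    (u : V d → ℝ)
    (hsupp : ∀ p, p ∉ LS d n t ∪ JS d n t → u p = 0)
    (hharm : ∀ p ∈ LS d n (t - 1), lap d n γ u p = 0)
    (hdir : ∀ p ∈ JS d n (t - 1), u p = 0)
    (hneu : ∀ p ∈ JS d n (t - 1), cur d n γ u p = 0) :
    ∀ p ∈ LS d n t, u p = 0 := by
  obtain ⟨hsym, hpos⟩ := hγ
  have hd0 : 0 < d := by omega
  set i0 : Fin d := ⟨d - 1, by omega⟩ with hi0def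
  have hwt0 : wt d i0 = 0 := by
    have : ((i0 : ℕ) : ℤ) = (d : ℤ) - 1 := by
      simp only [hi0def]
      omega
    unfold wt
    omega
  have hwt1 : ∀ j : Fin d, j ≠ i0 → 1 ≤ wt d j := by
    intro j hj
    have h1 : (j : ℕ) < d := j.isLt
    have h2 : (j : ℕ) ≠ d - 1 := by
      intro hc
      exact hj (Fin.ext (by simp [hi0def, hc]))
    unfold wt
    omega
  -- main induction on the measure `mu`
  have key : ∀ N : ℕ, ∀ x, x ∈ Dset d n → sum1 x ≤ t → (mu d n x).toNat = N → u x = 0 := by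
    intro N
    induction N using Nat.strong_induction_on with
    | _ N IH =>
      intro x hxD hxt hN
      have hμx := mu_pos (by omega) hn hxD
      have IH' : ∀ y, y ∈ Dset d n → sum1 y ≤ t → mu d n y < mu d n x → u y = 0 := by
        intro y hy hyt hlt
        have hμy := mu_pos (d := d) (n := n) (by omega) hn hy
        exact IH (mu d n y).toNat (by omega) y hy hyt rfl
      -- the shifted point p = x - e_{i0}
      set p : V d := Function.update x i0 (x i0 - 1) with hpdef
      have hpe : ∀ i, i ≠ i0 → p i = x i := fun i hi => Function.update_of_ne hi _ _
      have hpi0 : p i0 = x i0 - 1 := Function.update_self _ _ _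
      have hdpx : dist1 p x = 1 := by
        apply dist1_single (fun i hi => (hpe i hi).symm)
        rw [hpi0]
        have := (hxD i0).1
        rw [abs_of_nonpos (by omega)]
        ring
      have hdxp : dist1 x p = 1 := by
        apply dist1_single hpe
        rw [hpi0]
        rw [abs_of_nonneg (by omega)]
        ring
      have hsum1p : sum1 p = sum1 x - 1 := by
        rw [sum1_shift hpe, hpi0]; ring
      by_cases hx1 : x i0 = 1
      -- CASE A: lowest coordinate is 1, use Neumann + Dirichlet data at p ∈ K^-
      · have hpnD : p ∉ Dset d n := by
          intro hc
          have := (hc i0).1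
          omega
        have hpB : p ∈ Bset d n := ⟨hpnD, x, hxD, hdpx⟩
        have hpJS : p ∈ JS d n (t - 1) := by
          left
          exact ⟨hpB, by omega, i0, by omega⟩
        have hup : u p = 0 := hdir p hpJS
        have hAdjpx : Adj d n p x := ⟨hdpx, Or.inr hpB, Or.inl hxD, Or.inr hxD⟩
        have hxmem : x ∈ nbrD d n p := by
          rw [nbrD, Finset.mem_filter, nbr, Finset.mem_filter]
          exact ⟨⟨mem_box_of_D hxD, hAdjpx⟩, hxD⟩
        have hcur : cur d n γ u p = γ p x * (u x - u p) := by
          apply Finset.sum_eq_single_of_mem x hxmem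
          intro q hq hqx
          exfalso
          apply hqx
          rw [nbrD, Finset.mem_filter, nbr, Finset.mem_filter] at hq
          obtain ⟨⟨-, hAdj⟩, hqD⟩ := hq
          obtain ⟨j, hje, hjpm⟩ := dist1_cases hAdj.1
          by_cases hji : j = i0
          · funext i
            by_cases hii : i = i0
            · rw [hii]
              rw [hji] at hjpm
              have h1 := (hqD i0).1
              rcases hjpm with h2 | h2 <;> omega
            · rw [hje i (by rw [hji]; exact hii), hpe i hii]
          · have h1 := hje i0 (fun hc => hji hc.symm)
            have := (hqD i0).1
            omega
        have h0 := hneu p hpJS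
        rw [hcur, hup, sub_zero] at h0
        have hγpos := hpos p x hAdjpx
        rcases mul_eq_zero.mp h0 with h | h
        · exact absurd h (ne_of_gt hγpos)
        · exact h
      -- CASE B: x i0 ≥ 2, use harmonicity at p ∈ L_{ℓ-1}
      · have hx2 : 2 ≤ x i0 := by have := (hxD i0).1; omega
        have hpD : p ∈ Dset d n := by
          intro i
          by_cases hii : i = i0
          · subst hii
            have := (hxD i0).2
            omega
          · rw [hpe i hii]; exact hxD i
        have hup : u p = 0 :=
          IH' p hpD (by omega) (mu_slice hn hxD hpD (by omega))
        have hmwp : mw d p = mw d x := by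
          rw [mw_shift hpe, hwt0]; ring
        have hAdjpx : Adj d n p x := ⟨hdpx, Or.inl hpD, Or.inl hxD, Or.inl hpD⟩
        have hAdjxp : Adj d n x p := ⟨hdxp, Or.inl hxD, Or.inl hpD, Or.inl hxD⟩
        have hxmem : x ∈ nbr d n p := by
          rw [nbr, Finset.mem_filter]
          exact ⟨mem_box_of_D hxD, hAdjpx⟩
        have hlap : lap d n γ u p = γ x p * (u x - u p) := by
          apply Finset.sum_eq_single_of_mem x hxmem
          intro q hq hqx
          rw [nbr, Finset.mem_filter] at hq
          obtain ⟨-, hAdj⟩ := hq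
          obtain ⟨j, hje, hjpm⟩ := dist1_cases hAdj.1
          have hqV : q ∈ Vset d n := hAdj.2.2.1
          have hsq : sum1 q = sum1 p + (q j - p j) := sum1_shift hje
          have huq : u q = 0 := by
            rcases hjpm with hplus | hminus
            · -- q = p + e_j
              by_cases hji : j = i0
              · exfalso
                apply hqx
                funext i
                by_cases hii : i = i0
                · rw [hii]
                  rw [hji] at hplus
                  omega
                · rw [hje i (by rw [hji]; exact hii), hpe i hii]
              · have hsq' : sum1 q = sum1 x := by omega
                by_cases hqD : q ∈ Dset d n
                · -- interior, same slice, larger weight: induction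
                  apply IH' q hqD (by omega)
                  apply mu_same hsq'
                  have h1 := hwt1 j hji
                  have h2 : mw d q = mw d p + wt d j * (q j - p j) := mw_shift hje
                  rw [hmwp] at h2
                  nlinarith
                · -- upper boundary point in K^+, Dirichlet data
                  have hqB : q ∈ Bset d n := hqV.resolve_left hqD
                  have hqj : q j = (n : ℤ) + 1 := by
                    have hpj := hpD j
                    by_contra hc
                    apply hqD
                    intro i
                    by_cases hii : i = j
                    · subst hii; omega
                    · rw [hje i hii]; exact hpD i
                  apply hdir
                  right
                  exact ⟨hqB, by omega, j, hqj⟩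
            · -- q = p - e_j
              by_cases hqD : q ∈ Dset d n
              · exact IH' q hqD (by omega) (mu_slice hn hxD hqD (by omega))
              · have hqB : q ∈ Bset d n := hqV.resolve_left hqD
                have hqj : q j = 0 := by
                  have hpj := hpD j
                  by_contra hc
                  apply hqD
                  intro i
                  by_cases hii : i = j
                  · subst hii; omega
                  · rw [hje i hii]; exact hpD i
                apply hdir
                left
                exact ⟨hqB, by omega, j, hqj⟩
          rw [huq, hup]
          ring
        have h0 := hharm p ⟨hpD, by omega⟩
        rw [hlap, hup, sub_zero] at h0
        have hγpos := hpos x p hAdjxp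
        rcases mul_eq_zero.mp h0 with h | h
        · exact absurd h (ne_of_gt hγpos)
        · exact h
  intro p hp
  exact key (mu d n p).toNat p hp.1 hp.2 rfl


end DiscreteCalderon
end
end

section
/- In the d-dimensional lattice graph with the slicing sets L_t, L_t^S, J_t^S as defined, for d ≤ t ≤ dn the following are equivalent: (i) the mixed boundary value problem Δ_γ u = 0 on L_{t−1}^S, u = 0 on J_{t−1}^S, D_γ u = 0 on J_{t−1}^S has only the zero solution on L_t^S; (ii) the family of vectors {v_p restricted to L_{t−1}^S ∪ J_{t−1}^S : p ∈ L_t^S} is linearly independent, where v_p is the row of the graph Laplacian at p; (iii) the linear map T₂'^{(t)} from potentials on L_t to induced currents on J_{t−1}^S (via the γ-harmonic extension that vanishes on J_{t−1}^S) is injective. -/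
noncomputable section
open Classical Finset

namespace DiscreteCalderon

variable {d n : ℕ}

lemma dist1_self (p : V d) : dist1 p p = 0 := by simp [dist1]

lemma dist1_comm (p q : V d) : dist1 p q = dist1 q p := by
  simp [dist1, abs_sub_comm]

lemma Adj_symm {p q : V d} (h : Adj d n p q) : Adj d n q p := by
  obtain ⟨h1, h2, h3, h4⟩ := h
  exact ⟨by rw [dist1_comm]; exact h1, h3, h2, h4.symm⟩

lemma Adj_irrefl (p : V d) : ¬ Adj d n p p := by
  intro h; have := h.1; rw [dist1_self] at this; exact one_ne_zero this.symm

lemma Dset_subset_box : Dset d n ⊆ ↑(box d n) := by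
  intro p hp
  simp only [box, Finset.mem_coe, Fintype.mem_piFinset]
  intro i
  rcases hp i with ⟨h1, h2⟩
  simp only [Finset.mem_Icc]
  omega

lemma unit_step {p q : V d} (h : dist1 p q = 1) :
    ∃ j, (p j = q j + 1 ∨ p j = q j - 1) ∧ ∀ i, i ≠ j → p i = q i := by
  by_cases he : ∀ i, p i = q i
  · exfalso
    have : dist1 p q = 0 := Finset.sum_eq_zero fun i _ => by rw [he i]; simp
    omega
  push_neg at he
  obtain ⟨j, hj⟩ := he
  have h1 : 0 < |p j - q j| := abs_pos.mpr (sub_ne_zero.mpr hj)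
  have hsplit : dist1 p q = |p j - q j| + ∑ i ∈ Finset.univ.erase j, |p i - q i| := by
    rw [dist1, ← Finset.add_sum_erase _ _ (Finset.mem_univ j)]
  have hnn : 0 ≤ ∑ i ∈ Finset.univ.erase j, |p i - q i| :=
    Finset.sum_nonneg fun i _ => abs_nonneg _
  have hz : ∑ i ∈ Finset.univ.erase j, |p i - q i| = 0 := by omega
  have hall := (Finset.sum_eq_zero_iff_of_nonneg (fun i _ => abs_nonneg (p i - q i))).mp hz
  have hone : |p j - q j| = 1 := by omega
  rcases (abs_eq (by norm_num : (0:ℤ) ≤ 1)).mp hone with h' | h'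
  · refine ⟨j, Or.inl (by omega), fun i hi => ?_⟩
    have := abs_eq_zero.mp (hall i (Finset.mem_erase.mpr ⟨hi, Finset.mem_univ i⟩)); omega
  · refine ⟨j, Or.inr (by omega), fun i hi => ?_⟩
    have := abs_eq_zero.mp (hall i (Finset.mem_erase.mpr ⟨hi, Finset.mem_univ i⟩)); omega

lemma Bset_subset_box : Bset d n ⊆ ↑(box d n) := by
  rintro p ⟨hp, q, hq, hd1⟩
  obtain ⟨j, hj, he⟩ := unit_step hd1
  simp only [box, Finset.mem_coe, Fintype.mem_piFinset]
  intro i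
  simp only [Finset.mem_Icc]
  rcases hq i with ⟨h1, h2⟩
  by_cases hij : i = j
  · subst hij; omega
  · rw [he i hij]; omega

lemma Vset_subset_box : Vset d n ⊆ ↑(box d n) := by
  rintro p (hp | hp)
  exacts [Dset_subset_box hp, Bset_subset_box hp]

lemma not_mem_Bset_of_mem_Dset {p : V d} (hp : p ∈ Dset d n) : p ∉ Bset d n :=
  fun h => h.1 hp

lemma mem_nbr {p q : V d} : q ∈ nbr d n p ↔ Adj d n p q := by
  constructor
  · intro h; exact (Finset.mem_filter.mp h).2
  · intro h
    refine Finset.mem_filter.mpr ⟨?_, h⟩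
    exact Finset.mem_coe.mp (Vset_subset_box h.2.2.1)

lemma sum1_step {p q : V d} (h : dist1 p q = 1) :
    sum1 p = sum1 q + 1 ∨ sum1 p = sum1 q - 1 := by
  obtain ⟨j, hj, he⟩ := unit_step h
  have hsp : sum1 p = p j + ∑ i ∈ Finset.univ.erase j, p i := by
    rw [sum1, ← Finset.add_sum_erase _ _ (Finset.mem_univ j)]
  have hsq : sum1 q = q j + ∑ i ∈ Finset.univ.erase j, q i := by
    rw [sum1, ← Finset.add_sum_erase _ _ (Finset.mem_univ j)]
  have hrest : ∑ i ∈ Finset.univ.erase j, p i = ∑ i ∈ Finset.univ.erase j, q i :=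
    Finset.sum_congr rfl fun i hi => he i (Finset.mem_erase.mp hi).1
  rcases hj with h' | h' <;> [left; right] <;> omega

lemma boundary_nbr {p q : V d} (hq : q ∈ Dset d n) (hp : p ∈ Bset d n)
    (h : dist1 p q = 1) :
    (sum1 p = sum1 q + 1 ∧ ∃ i, p i = (n : ℤ) + 1) ∨
      (sum1 p = sum1 q - 1 ∧ ∃ i, p i = 0) := by
  obtain ⟨j, hj, he⟩ := unit_step h
  have hsp : sum1 p = p j + ∑ i ∈ Finset.univ.erase j, p i := by
    rw [sum1, ← Finset.add_sum_erase _ _ (Finset.mem_univ j)]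
  have hsq : sum1 q = q j + ∑ i ∈ Finset.univ.erase j, q i := by
    rw [sum1, ← Finset.add_sum_erase _ _ (Finset.mem_univ j)]
  have hrest : ∑ i ∈ Finset.univ.erase j, p i = ∑ i ∈ Finset.univ.erase j, q i :=
    Finset.sum_congr rfl fun i hi => he i (Finset.mem_erase.mp hi).1
  have hbad : ∃ i, ¬(1 ≤ p i ∧ p i ≤ (n : ℤ)) := by
    by_contra hb
    push_neg at hb
    exact hp.1 fun i => ⟨(hb i).1, (hb i).2⟩
  obtain ⟨i, hi⟩ := hbad
  have hij : i = j := by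
    by_contra hij
    rw [he i hij] at hi
    exact hi (hq i)
  subst hij
  rcases hq i with ⟨hq1, hq2⟩
  rcases hj with h' | h'
  · left; exact ⟨by omega, i, by omega⟩
  · right; exact ⟨by omega, i, by omega⟩

lemma bad_coord {p : V d} (hp : p ∈ Bset d n) (i : Fin d) (h : ¬(1 ≤ p i ∧ p i ≤ (n : ℤ))) :
    p i = 0 ∨ p i = (n : ℤ) + 1 := by
  obtain ⟨hpD, q, hq, hd1⟩ := hp
  obtain ⟨j, hj, he⟩ := unit_step hd1
  rcases hq i with ⟨h1, h2⟩
  by_cases hij : i = j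
  · subst hij; omega
  · rw [he i hij] at h; omega

lemma LS_subset_Dset {t : ℤ} : LS d n t ⊆ Dset d n := fun _ h => h.1
lemma L_subset_LS {t : ℤ} : L d n t ⊆ LS d n t := fun _ h => ⟨h.1, le_of_eq h.2⟩
lemma LS_mono {s t : ℤ} (h : s ≤ t) : LS d n s ⊆ LS d n t := fun _ hx => ⟨hx.1, hx.2.trans h⟩
lemma JS_subset_Bset {t : ℤ} : JS d n t ⊆ Bset d n := by
  rintro p (h | h) <;> exact h.1
lemma JS_mono {s t : ℤ} (h : s ≤ t) : JS d n s ⊆ JS d n t := by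
  rintro p (hp | hp)
  · exact Or.inl ⟨hp.1, hp.2.1.trans h, hp.2.2⟩
  · exact Or.inr ⟨hp.1, hp.2.1.trans (by omega), hp.2.2⟩

/-- Every neighbour (in the graph) of a vertex in `LS (t-1)` lies in `LS t ∪ JS (t-1)`. -/
lemma nbr_of_LS {t : ℤ} {q p : V d} (hq : q ∈ LS d n (t - 1)) (h : Adj d n q p) :
    p ∈ LS d n t ∪ JS d n (t - 1) := by
  obtain ⟨hd1, _, hpV, _⟩ := h
  rcases hpV with hpD | hpB
  · left
    rcases sum1_step (by rw [dist1_comm]; exact hd1) with h' | h' <;>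
      exact ⟨hpD, by have := hq.2; omega⟩
  · right
    rcases boundary_nbr hq.1 hpB (by rw [dist1_comm]; exact hd1) with ⟨hs, i, hi⟩ | ⟨hs, i, hi⟩
    · right; exact ⟨hpB, by have := hq.2; omega, i, hi⟩
    · left; exact ⟨hpB, by have := hq.2; omega, i, hi⟩

lemma nbrD_eq_nbr_of_Bset {q : V d} (hq : q ∈ Bset d n) : nbrD d n q = nbr d n q := by
  apply Finset.filter_true_of_mem
  intro p hp
  have hA := mem_nbr.mp hp
  rcases hA.2.2.2 with h | h
  · exact absurd h (not_mem_Bset_of_mem_Dset · hq)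
  · exact h

lemma vrow_term_eq (γ : V d → V d → ℝ) (u : V d → ℝ) (p q : V d) :
    u p * vrow d n γ p q =
      (if Adj d n p q then u p * γ p q else 0) +
        (if p = q then -(u p * ∑ r ∈ nbr d n q, γ q r) else 0) := by
  by_cases hA : Adj d n p q
  · have hne : p ≠ q := fun h => Adj_irrefl q (h ▸ hA)
    simp [vrow, hA, hne]
  · by_cases he : p = q
    · subst he
      simp [vrow, hA, mul_neg]
    · have : ¬ q = p := fun h => he h.symm
      simp [vrow, hA, he, this]

lemma vrow_sum_eq (γ : V d → V d → ℝ) (hγ : GoodCond d n γ) (t : ℤ) (u : V d → ℝ)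
    (hD : ∀ p ∈ Dset d n, p ∉ LS d n t → u p = 0) :
    (∀ q ∈ LS d n (t - 1), (∀ p ∈ JS d n (t - 1), u p = 0) →
       ∑ p ∈ (box d n).filter (· ∈ LS d n t), u p * vrow d n γ p q = lap d n γ u q) ∧
    (∀ q ∈ JS d n (t - 1), u q = 0 →
       ∑ p ∈ (box d n).filter (· ∈ LS d n t), u p * vrow d n γ p q = cur d n γ u q) := by
  set Ft := (box d n).filter (· ∈ LS d n t) with hFt
  have hsplit : ∀ q : V d,
      ∑ p ∈ Ft, u p * vrow d n γ p q =
        (∑ p ∈ Ft, if Adj d n p q then u p * γ p q else 0) +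
          (if q ∈ Ft then -(u q * ∑ r ∈ nbr d n q, γ q r) else 0) := by
    intro q
    rw [← Finset.sum_ite_eq' Ft q (fun p => -(u p * ∑ r ∈ nbr d n q, γ q r)),
      ← Finset.sum_add_distrib]
    exact Finset.sum_congr rfl fun p _ => vrow_term_eq γ u p q
  have hfirst : ∀ q : V d, (∀ p, Adj d n q p → p ∉ LS d n t → u p = 0) →
      (∑ p ∈ Ft, if Adj d n p q then u p * γ p q else 0) =
        ∑ p ∈ nbr d n q, u p * γ p q := by
    intro q hz
    have h1 : (∑ p ∈ Ft, if Adj d n p q then u p * γ p q else 0) =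
        ∑ p ∈ box d n, if Adj d n p q then u p * γ p q else 0 := by
      apply Finset.sum_subset (Finset.filter_subset _ _)
      intro p hp hnp
      have hpLS : p ∉ LS d n t := fun h => hnp (Finset.mem_filter.mpr ⟨hp, h⟩)
      by_cases hA : Adj d n p q
      · rw [if_pos hA, hz p (Adj_symm hA) hpLS, zero_mul]
      · rw [if_neg hA]
    rw [h1, nbr, Finset.sum_filter]
    exact Finset.sum_congr rfl fun p _ => by
      by_cases hA : Adj d n q p
      · rw [if_pos hA, if_pos (Adj_symm hA)]
      · rw [if_neg hA, if_neg (fun h => hA (Adj_symm h))]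
  constructor
  · intro q hq hB
    have hz : ∀ p, Adj d n q p → p ∉ LS d n t → u p = 0 := by
      intro p hA hp
      rcases nbr_of_LS hq hA with h | h
      · exact absurd h hp
      · exact hB p h
    have hqF : q ∈ Ft := Finset.mem_filter.mpr
      ⟨Finset.mem_coe.mp (Dset_subset_box hq.1), ⟨hq.1, by have := hq.2; omega⟩⟩
    rw [hsplit q, hfirst q hz, if_pos hqF, lap]
    have : ∀ p ∈ nbr d n q, γ p q * (u p - u q) = u p * γ p q - γ q p * u q := by
      intro p _
      rw [hγ.1 q p]; ring
    rw [Finset.sum_congr rfl this, Finset.sum_sub_distrib, ← Finset.sum_mul]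
    ring
  · intro q hq hq0
    have hqB : q ∈ Bset d n := JS_subset_Bset hq
    have hz : ∀ p, Adj d n q p → p ∉ LS d n t → u p = 0 := by
      intro p hA hp
      rcases hA.2.2.2 with h | h
      · exact absurd h (not_mem_Bset_of_mem_Dset · hqB)
      · exact hD p h hp
    have hqF : q ∉ Ft := by
      intro h
      exact not_mem_Bset_of_mem_Dset (LS_subset_Dset (Finset.mem_filter.mp h).2) hqB
    rw [hsplit q, hfirst q hz, if_neg hqF, add_zero, cur, nbrD_eq_nbr_of_Bset hqB]
    refine Finset.sum_congr rfl fun p _ => ?_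
    rw [hq0, hγ.1 q p]; ring

lemma LS_mem_Ft {t : ℤ} {p : V d} (h : p ∈ LS d n t) :
    p ∈ (box d n).filter (· ∈ LS d n t) :=
  Finset.mem_filter.mpr ⟨Finset.mem_coe.mp (Dset_subset_box h.1), h⟩

lemma JS_not_LS {t s : ℤ} {p : V d} (h : p ∈ JS d n s) : p ∉ LS d n t :=
  fun h' => not_mem_Bset_of_mem_Dset (LS_subset_Dset h') (JS_subset_Bset h)

lemma part1 (γ : V d → V d → ℝ) (hγ : GoodCond d n γ) (t : ℤ) :
    (∀ u : V d → ℝ,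
        (∀ p, p ∉ LS d n t ∪ JS d n t → u p = 0) →
        (∀ p ∈ LS d n (t - 1), lap d n γ u p = 0) →
        (∀ p ∈ JS d n (t - 1), u p = 0) →
        (∀ p ∈ JS d n (t - 1), cur d n γ u p = 0) →
        ∀ p ∈ LS d n t, u p = 0) ↔
      LinearIndependent ℝ
        (fun p : (LS d n t : Set (V d)) =>
          rst (LS d n (t - 1) ∪ JS d n (t - 1)) (vrow d n γ p)) := by
  classical
  set S : Set (V d) := LS d n (t - 1) ∪ JS d n (t - 1) with hS
  set Ft := (box d n).filter (· ∈ LS d n t) with hFt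
  constructor
  · -- uniqueness → linear independence
    intro huniq
    rw [linearIndependent_iff']
    intro s g hsum
    set u : V d → ℝ := fun q =>
      if h : q ∈ LS d n t then (if (⟨q, h⟩ : (LS d n t : Set (V d))) ∈ s then g ⟨q, h⟩ else 0)
      else 0 with hu
    have hD : ∀ p ∈ Dset d n, p ∉ LS d n t → u p = 0 := fun p _ hp => dif_neg hp
    have h0 : ∀ p, p ∉ LS d n t ∪ JS d n t → u p = 0 := by
      intro p hp
      exact dif_neg fun h => hp (Or.inl h)
    have hJval : ∀ p ∈ JS d n (t - 1), u p = 0 := fun p hp => dif_neg (JS_not_LS hp)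
    have hgu : ∀ i ∈ s, g i = u ↑i := by
      intro i hi
      simp only [hu]
      rw [dif_pos i.2, if_pos (show _ ∈ s from hi)]
    -- the pointwise consequence of hsum
    have hpt : ∀ q ∈ S, ∑ p ∈ Ft, u p * vrow d n γ p q = 0 := by
      intro q hq
      have h1 : ∑ i ∈ s, g i * vrow d n γ (↑i) q = 0 := by
        have := congrFun hsum q
        rw [Finset.sum_apply] at this
        simp only [Pi.smul_apply, smul_eq_mul, rst, if_pos hq] at this
        simpa using this
      have h3 : ∑ i ∈ s, g i * vrow d n γ (↑i) q =
          ∑ p ∈ s.map ⟨Subtype.val, Subtype.val_injective⟩, u p * vrow d n γ p q := by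
        rw [Finset.sum_map]
        simp only [Function.Embedding.coeFn_mk]
        exact Finset.sum_congr rfl fun i hi => by rw [hgu i hi]
      have h4 : ∑ p ∈ s.map ⟨Subtype.val, Subtype.val_injective⟩, u p * vrow d n γ p q =
          ∑ p ∈ Ft, u p * vrow d n γ p q := by
        apply Finset.sum_subset
        · intro p hp
          obtain ⟨i, _, rfl⟩ := Finset.mem_map.mp hp
          exact LS_mem_Ft i.2
        · intro p hp hnp
          have hpLS : p ∈ LS d n t := (Finset.mem_filter.mp hp).2
          have hup : u p = 0 := by
            simp only [hu]
            rw [dif_pos hpLS, if_neg]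
            intro hmem
            exact hnp (Finset.mem_map.mpr ⟨⟨p, hpLS⟩, hmem, rfl⟩)
          rw [hup, zero_mul]
      rw [← h4, ← h3, h1]
    have hvs := vrow_sum_eq γ hγ t u hD
    have hlap : ∀ p ∈ LS d n (t - 1), lap d n γ u p = 0 := by
      intro q hq
      rw [← hvs.1 q hq hJval]
      exact hpt q (Or.inl hq)
    have hcur : ∀ p ∈ JS d n (t - 1), cur d n γ u p = 0 := by
      intro q hq
      rw [← hvs.2 q hq (hJval q hq)]
      exact hpt q (Or.inr hq)
    have hz := huniq u h0 hlap hJval hcur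
    intro i hi
    rw [hgu i hi]
    exact hz i i.2
  · -- linear independence → uniqueness
    intro hLI u h0 hlap hJval hcur
    rw [linearIndependent_iff'] at hLI
    have hD : ∀ p ∈ Dset d n, p ∉ LS d n t → u p = 0 := by
      intro p hp hpLS
      exact h0 p (by
        rintro (h | h)
        · exact hpLS h
        · exact not_mem_Bset_of_mem_Dset hp (JS_subset_Bset h))
    -- the finset of all indices coming from Ft
    have hFtmem : ∀ p ∈ Ft, p ∈ LS d n t := fun p hp => (Finset.mem_filter.mp hp).2
    set e : {x // x ∈ Ft} ↪ (LS d n t : Set (V d)) :=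
      ⟨fun x => ⟨x.1, hFtmem x.1 x.2⟩, by
        intro a b hab
        apply Subtype.ext
        have := congrArg Subtype.val hab
        exact this⟩ with he
    set s : Finset (LS d n t : Set (V d)) := Ft.attach.map e with hs
    have hsum : ∑ i ∈ s, u ↑i • rst S (vrow d n γ ↑i) = 0 := by
      have hred : ∑ i ∈ s, u ↑i • rst S (vrow d n γ ↑i) =
          ∑ p ∈ Ft, u p • rst S (vrow d n γ p) := by
        rw [hs, Finset.sum_map, ← Finset.sum_attach Ft (fun p => u p • rst S (vrow d n γ p))]
        exact Finset.sum_congr rfl fun x _ => rfl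
      rw [hred]
      funext q
      rw [Finset.sum_apply]
      simp only [Pi.smul_apply, smul_eq_mul, Pi.zero_apply]
      by_cases hq : q ∈ S
      · simp only [rst, if_pos hq]
        rcases hq with hq | hq
        · rw [(vrow_sum_eq γ hγ t u hD).1 q hq hJval]
          exact hlap q hq
        · rw [(vrow_sum_eq γ hγ t u hD).2 q hq (hJval q hq)]
          exact hcur q hq
      · simp [rst, if_neg hq]
    intro p hp
    have hpF : p ∈ Ft := LS_mem_Ft hp
    have := hLI s (fun i => u ↑i) hsum ⟨p, hp⟩ ?_
    · exact this
    · rw [hs, Finset.mem_map]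
      exact ⟨⟨p, hpF⟩, Finset.mem_attach _ _, rfl⟩

lemma nbr_sum_eq (p : V d) (f : V d → ℝ) :
    ∑ q ∈ nbr d n p, f q = ∑ q ∈ box d n, if Adj d n p q then f q else 0 := by
  rw [nbr, Finset.sum_filter]

/-- Energy argument: a function supported on `LS s` and γ-harmonic there takes
equal values across every edge. -/
lemma energy_key (γ : V d → V d → ℝ) (hγ : GoodCond d n γ) (s : ℤ) (w : V d → ℝ)
    (hsup : ∀ p, p ∉ LS d n s → w p = 0)
    (hharm : ∀ p ∈ LS d n s, lap d n γ w p = 0) :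
    ∀ p ∈ box d n, ∀ q ∈ box d n, Adj d n p q → w p = w q := by
  classical
  set f : V d → V d → ℝ := fun p q => if Adj d n p q then γ p q * (w q - w p) ^ 2 else 0
    with hf
  have hE : ∑ p ∈ box d n, w p * lap d n γ w p = 0 := by
    apply Finset.sum_eq_zero
    intro p _
    by_cases hp : p ∈ LS d n s
    · rw [hharm p hp, mul_zero]
    · rw [hsup p hp, zero_mul]
  -- symmetrization identity
  have hswap : ∀ g : V d → V d → ℝ,
      (∑ p ∈ box d n, ∑ q ∈ box d n, if Adj d n p q then g p q else 0) =
        ∑ p ∈ box d n, ∑ q ∈ box d n, if Adj d n p q then g q p else 0 := by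
    intro g
    rw [Finset.sum_comm]
    refine Finset.sum_congr rfl fun p _ => Finset.sum_congr rfl fun q _ => ?_
    by_cases hA : Adj d n q p
    · rw [if_pos hA, if_pos (Adj_symm hA)]
    · rw [if_neg hA, if_neg fun h => hA (Adj_symm h)]
  have hQ : ∑ p ∈ box d n, ∑ q ∈ box d n, f p q = 0 := by
    have hterm : ∀ p q, f p q =
        ((if Adj d n p q then γ p q * w q ^ 2 else 0) +
          (if Adj d n p q then γ p q * w p ^ 2 else 0)) -
          2 * (if Adj d n p q then γ p q * (w p * w q) else 0) := by
      intro p q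
      by_cases hA : Adj d n p q
      · simp only [hf, if_pos hA]; ring
      · simp only [hf, if_neg hA]; ring
    have hsq : (∑ p ∈ box d n, ∑ q ∈ box d n, if Adj d n p q then γ p q * w q ^ 2 else 0) =
        ∑ p ∈ box d n, ∑ q ∈ box d n, if Adj d n p q then γ p q * w p ^ 2 else 0 := by
      have := hswap (fun p q => γ p q * w q ^ 2)
      rw [this]
      refine Finset.sum_congr rfl fun p _ => Finset.sum_congr rfl fun q _ => ?_
      by_cases hA : Adj d n p q
      · rw [if_pos hA, if_pos hA, hγ.1 p q]
      · rw [if_neg hA, if_neg hA]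
    have hlapid : ∑ p ∈ box d n, w p * lap d n γ w p =
        (∑ p ∈ box d n, ∑ q ∈ box d n, if Adj d n p q then γ p q * (w p * w q) else 0) -
          ∑ p ∈ box d n, ∑ q ∈ box d n, if Adj d n p q then γ p q * w p ^ 2 else 0 := by
      rw [← Finset.sum_sub_distrib]
      refine Finset.sum_congr rfl fun p _ => ?_
      rw [lap, nbr_sum_eq p (fun q => γ q p * (w q - w p)), Finset.mul_sum,
        ← Finset.sum_sub_distrib]
      refine Finset.sum_congr rfl fun q _ => ?_
      by_cases hA : Adj d n p q
      · simp only [if_pos hA, hγ.1 q p]; ring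
      · simp only [if_neg hA]; ring
    calc ∑ p ∈ box d n, ∑ q ∈ box d n, f p q
        = (∑ p ∈ box d n, ∑ q ∈ box d n,
            ((if Adj d n p q then γ p q * w q ^ 2 else 0) +
              (if Adj d n p q then γ p q * w p ^ 2 else 0)) -
            ∑ p ∈ box d n, ∑ q ∈ box d n,
              2 * (if Adj d n p q then γ p q * (w p * w q) else 0)) := by
          rw [← Finset.sum_sub_distrib]
          refine Finset.sum_congr rfl fun p _ => ?_
          rw [← Finset.sum_sub_distrib]
          exact Finset.sum_congr rfl fun q _ => hterm p q
      _ = 0 := by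
          simp only [Finset.sum_add_distrib, ← Finset.mul_sum]
          rw [hsq]
          have := hlapid
          rw [hE] at this
          have h2 : (∑ p ∈ box d n, ∑ q ∈ box d n,
              if Adj d n p q then γ p q * (w p * w q) else 0) =
              ∑ p ∈ box d n, ∑ q ∈ box d n,
                if Adj d n p q then γ p q * w p ^ 2 else 0 := by linarith
          rw [h2]; ring
  -- positivity forces equality across edges
  have hnn : ∀ x ∈ (box d n) ×ˢ (box d n), 0 ≤ f x.1 x.2 := by
    rintro ⟨p, q⟩ _
    by_cases hA : Adj d n p q
    · simp only [hf, if_pos hA]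
      exact mul_nonneg (le_of_lt (hγ.2 p q hA)) (sq_nonneg _)
    · simp [hf, if_neg hA]
  have hQ' : ∑ x ∈ (box d n) ×ˢ (box d n), f x.1 x.2 = 0 := by
    rw [Finset.sum_product]; exact hQ
  have hall := (Finset.sum_eq_zero_iff_of_nonneg hnn).mp hQ'
  intro p hp q hq hA
  have := hall (p, q) (Finset.mem_product.mpr ⟨hp, hq⟩)
  simp only [hf, if_pos hA] at this
  have hγpos := hγ.2 p q hA
  have hsq0 : (w q - w p) ^ 2 = 0 := by
    rcases mul_eq_zero.mp this with h | h
    · exact absurd h (ne_of_gt hγpos)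
    · exact h
  have := pow_eq_zero_iff (n := 2) (by norm_num) |>.mp hsq0
  linarith [sub_eq_zero.mp this]

/-- Propagation to zero along a coordinate direction. -/
lemma ladder (hd : 0 < d) (s : ℤ) (w : V d → ℝ)
    (hsup : ∀ p, p ∉ LS d n s → w p = 0)
    (key : ∀ p ∈ box d n, ∀ q ∈ box d n, Adj d n p q → w p = w q) :
    ∀ p, w p = 0 := by
  classical
  set i0 : Fin d := ⟨0, hd⟩ with hi0
  set succ : V d → V d := fun p k => p k + if k = i0 then 1 else 0 with hsucc
  have hdist : ∀ p : V d, dist1 p (succ p) = 1 := by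
    intro p
    have : ∀ k, |p k - succ p k| = if k = i0 then 1 else 0 := by
      intro k
      by_cases hk : k = i0 <;> simp [hsucc, hk]
    rw [dist1, Finset.sum_congr rfl fun k _ => this k]
    simp
  have hval : ∀ p : V d, succ p i0 = p i0 + 1 := fun p => by simp [hsucc]
  have hAdj : ∀ p ∈ Dset d n, Adj d n p (succ p) := by
    intro p hp
    have hV : succ p ∈ Vset d n := by
      by_cases hcase : p i0 + 1 ≤ (n : ℤ)
      · left
        intro k
        by_cases hk : k = i0
        · subst hk
          simp only [hsucc, if_pos rfl]
          rcases hp i0 with ⟨h1, _⟩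
          omega
        · simp only [hsucc, if_neg hk, add_zero]
          exact hp k
      · right
        constructor
        · intro hD
          rcases hD i0 with ⟨_, h2⟩
          rcases hp i0 with ⟨_, h4⟩
          rw [hval p] at h2
          omega
        · exact ⟨p, hp, by rw [dist1_comm]; exact hdist p⟩
    exact ⟨hdist p, Or.inl hp, hV, Or.inl hp⟩
  have hstep : ∀ p ∈ Dset d n, w p = w (succ p) := by
    intro p hp
    exact key p (Finset.mem_coe.mp (Dset_subset_box hp)) (succ p)
      (Finset.mem_coe.mp (Vset_subset_box (hAdj p hp).2.2.1)) (hAdj p hp)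
  have aux : ∀ j : ℕ, ∀ p : V d, p ∈ Dset d n → (n : ℤ) ≤ p i0 + j → w p = 0 := by
    intro j
    induction j with
    | zero =>
        intro p hp hle
        rw [hstep p hp]
        apply hsup
        intro hLS
        rcases hLS.1 i0 with ⟨_, h2⟩
        rcases hp i0 with ⟨_, h4⟩
        rw [hval p] at h2
        omega
    | succ j ih =>
        intro p hp hle
        rw [hstep p hp]
        by_cases hD : succ p ∈ Dset d n
        · apply ih (succ p) hD
          rw [hval p]
          omega
        · exact hsup _ fun hLS => hD hLS.1
  intro p
  by_cases hp : p ∈ LS d n s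
  · apply aux n p hp.1
    rcases hp.1 i0 with ⟨h1, _⟩
    omega
  · exact hsup p hp

lemma part2 (hd : 0 < d) (γ : V d → V d → ℝ) (hγ : GoodCond d n γ) (t : ℤ) :
    (∀ u : V d → ℝ,
        (∀ p, p ∉ LS d n t ∪ JS d n t → u p = 0) →
        (∀ p ∈ LS d n (t - 1), lap d n γ u p = 0) →
        (∀ p ∈ JS d n (t - 1), u p = 0) →
        (∀ p ∈ JS d n (t - 1), cur d n γ u p = 0) →
        ∀ p ∈ LS d n t, u p = 0) ↔
      (∀ u : V d → ℝ,
        (∀ p, p ∉ LS d n t ∪ JS d n (t - 1) → u p = 0) →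
        (∀ p ∈ LS d n (t - 1), lap d n γ u p = 0) →
        (∀ p ∈ JS d n (t - 1), u p = 0) →
        (∀ p ∈ JS d n (t - 1), cur d n γ u p = 0) →
        ∀ p ∈ L d n t, u p = 0) := by
  classical
  constructor
  · intro h1 u h0 hlap hJval hcur p hp
    refine h1 u ?_ hlap hJval hcur p (L_subset_LS hp)
    intro q hq
    apply h0
    rintro (h | h)
    · exact hq (Or.inl h)
    · exact hq (Or.inr (JS_mono (by omega) h))
  · intro h3 u h0 hlap hJval hcur p hp
    set u' : V d → ℝ := fun q => if q ∈ LS d n t ∪ JS d n (t - 1) then u q else 0 with hu'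
    have hu'eq : ∀ q ∈ LS d n t ∪ JS d n (t - 1), u' q = u q := fun q hq => if_pos hq
    have hu'0 : ∀ q, q ∉ LS d n t ∪ JS d n (t - 1) → u' q = 0 := fun q hq => if_neg hq
    have hlap' : ∀ q ∈ LS d n (t - 1), lap d n γ u' q = 0 := by
      intro q hq
      have hq' : u' q = u q := hu'eq q (Or.inl (LS_mono (by omega) hq))
      rw [← hlap q hq, lap, lap]
      refine Finset.sum_congr rfl fun p hpn => ?_
      rw [hq', hu'eq p (nbr_of_LS hq (mem_nbr.mp hpn))]
    have hJval' : ∀ q ∈ JS d n (t - 1), u' q = 0 := by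
      intro q hq
      rw [hu'eq q (Or.inr hq)]
      exact hJval q hq
    have hcur' : ∀ q ∈ JS d n (t - 1), cur d n γ u' q = 0 := by
      intro q hq
      have hq' : u' q = u q := hu'eq q (Or.inr hq)
      rw [← hcur q hq, cur, cur]
      refine Finset.sum_congr rfl fun p hpn => ?_
      have hpD : p ∈ Dset d n := (Finset.mem_filter.mp hpn).2
      by_cases hpL : p ∈ LS d n t
      · rw [hq', hu'eq p (Or.inl hpL)]
      · have h1 : u' p = 0 := hu'0 p (by
          rintro (h | h)
          · exact hpL h
          · exact not_mem_Bset_of_mem_Dset hpD (JS_subset_Bset h))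
        have h2 : u p = 0 := h0 p (by
          rintro (h | h)
          · exact hpL h
          · exact not_mem_Bset_of_mem_Dset hpD (JS_subset_Bset h))
        rw [hq', h1, h2]
    have hLt : ∀ q ∈ L d n t, u q = 0 := by
      intro q hq
      have := h3 u' hu'0 hlap' hJval' hcur' q hq
      rwa [hu'eq q (Or.inl (L_subset_LS hq))] at this
    -- propagate downwards using the energy argument
    set w : V d → ℝ := fun q => if q ∈ LS d n (t - 1) then u q else 0 with hw
    have hwsup : ∀ q, q ∉ LS d n (t - 1) → w q = 0 := fun q hq => if_neg hq
    have hwharm : ∀ q ∈ LS d n (t - 1), lap d n γ w q = 0 := by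
      intro q hq
      rw [← hlap q hq, lap, lap]
      refine Finset.sum_congr rfl fun r hrn => ?_
      have hq' : w q = u q := if_pos hq
      have hr' : w r = u r := by
        rcases nbr_of_LS hq (mem_nbr.mp hrn) with hr | hr
        · by_cases hr1 : r ∈ LS d n (t - 1)
          · simp only [hw]
            exact if_pos hr1
          · have hs : sum1 r = t := by
              have h1 := hr.2
              have h2 : ¬ sum1 r ≤ t - 1 := fun h => hr1 ⟨hr.1, h⟩
              omega
            simp only [hw]
            rw [if_neg hr1, hLt r ⟨hr.1, hs⟩]
        · simp only [hw]
          rw [if_neg (fun h => not_mem_Bset_of_mem_Dset (LS_subset_Dset h)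
            (JS_subset_Bset hr)), hJval r hr]
      rw [hq', hr']
    have key := energy_key γ hγ (t - 1) w hwsup hwharm
    have hzero := ladder hd (t - 1) w hwsup key
    by_cases hp1 : sum1 p ≤ t - 1
    · have hpL : p ∈ LS d n (t - 1) := ⟨hp.1, hp1⟩
      have := hzero p
      simp only [hw] at this
      rwa [if_pos hpL] at this
    · exact hLt p ⟨hp.1, by have := hp.2; omega⟩

/-- equivalence of (i) uniqueness for the mixed boundary value problem,
(ii) linear independence of the restricted Laplacian rows, and (iii) injectivity of
the corner potential-to-current map `T₂'^{(t)}`. -/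
theorem stmt3 (d n : ℕ) (hd : 2 ≤ d) (hn : 1 ≤ n)
    (γ : V d → V d → ℝ) (hγ : GoodCond d n γ)
    (t : ℤ) (ht1 : (d : ℤ) ≤ t) (ht2 : t ≤ (d : ℤ) * n) :
    ((∀ u : V d → ℝ,
        (∀ p, p ∉ LS d n t ∪ JS d n t → u p = 0) →
        (∀ p ∈ LS d n (t - 1), lap d n γ u p = 0) →
        (∀ p ∈ JS d n (t - 1), u p = 0) →
        (∀ p ∈ JS d n (t - 1), cur d n γ u p = 0) →
        ∀ p ∈ LS d n t, u p = 0) ↔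
      LinearIndependent ℝ
        (fun p : (LS d n t : Set (V d)) =>
          rst (LS d n (t - 1) ∪ JS d n (t - 1)) (vrow d n γ p))) ∧
    ((∀ u : V d → ℝ,
        (∀ p, p ∉ LS d n t ∪ JS d n t → u p = 0) →
        (∀ p ∈ LS d n (t - 1), lap d n γ u p = 0) →
        (∀ p ∈ JS d n (t - 1), u p = 0) →
        (∀ p ∈ JS d n (t - 1), cur d n γ u p = 0) →
        ∀ p ∈ LS d n t, u p = 0) ↔
      (∀ u : V d → ℝ,
        (∀ p, p ∉ LS d n t ∪ JS d n (t - 1) → u p = 0) →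
        (∀ p ∈ LS d n (t - 1), lap d n γ u p = 0) →
        (∀ p ∈ JS d n (t - 1), u p = 0) →
        (∀ p ∈ JS d n (t - 1), cur d n γ u p = 0) →
        ∀ p ∈ L d n t, u p = 0)) := by
  exact ⟨part1 γ hγ t, part2 (by omega) γ hγ t⟩

end DiscreteCalderon
end
end

section
/- Let G be the d-dimensional lattice graph and, for d−1 ≤ t ≤ dn−1, let T^{(t)} = Λ_γ(∂D \ J_t^S ; J_t^S) be the submatrix of the Dirichlet-to-Neumann matrix mapping boundary potentials supported on J_t^S to boundary currents measured on ∂D \ J_t^S. Let T₁^{(t)} : ℝ^{J_t^S} → ℝ^{L_{t+1}} send φ to the restriction to L_{t+1} of the γ-harmonic extension of (the zero-extension of) φ, and let T₂^{(t)} : ℝ^{L_{t+1}} → ℝ^{∂D \ J_t^S} be the corresponding partial DtN map of the upper subgraph G^{(t)} above the interface L_{t+1}. Then T^{(t)} = T₂^{(t)} ∘ T₁^{(t)}. -/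
noncomputable section
open Classical Finset

namespace DiscreteCalderon

section Helpers
variable {d n : ℕ}

lemma exists_diff {p q : V d} (h : dist1 p q = 1) :
    ∃ i, |p i - q i| = 1 ∧ ∀ j, j ≠ i → p j = q j := by
  have h0 : ∃ i, p i ≠ q i := by
    by_contra hc; push_neg at hc
    have : dist1 p q = 0 := by
      unfold dist1; apply Finset.sum_eq_zero; intro i _; simp [hc i]
    omega
  obtain ⟨i, hi⟩ := h0
  have h1 : (1:ℤ) ≤ |p i - q i| := Int.one_le_abs (sub_ne_zero.mpr hi)
  have hsplit : |p i - q i| + ∑ j ∈ Finset.univ.erase i, |p j - q j| = 1 := by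
    have heq := Finset.add_sum_erase Finset.univ (fun j => |p j - q j|) (Finset.mem_univ i)
    unfold dist1 at h; rw [heq]; exact h
  have hnn : 0 ≤ ∑ j ∈ Finset.univ.erase i, |p j - q j| :=
    Finset.sum_nonneg fun j _ => abs_nonneg _
  have hrest : ∑ j ∈ Finset.univ.erase i, |p j - q j| = 0 := by linarith
  refine ⟨i, by linarith, fun j hj => ?_⟩
  have hz := (Finset.sum_eq_zero_iff_of_nonneg fun j _ => abs_nonneg (p j - q j)).1 hrest j
    (Finset.mem_erase.2 ⟨hj, Finset.mem_univ j⟩)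
  have := abs_eq_zero.mp hz
  linarith

lemma diff_at {p q : V d} (h : dist1 p q = 1) {i} (hi : p i ≠ q i) :
    |p i - q i| = 1 ∧ ∀ j, j ≠ i → p j = q j := by
  obtain ⟨k, hk1, hk2⟩ := exists_diff h
  rcases eq_or_ne i k with rfl | hik
  · exact ⟨hk1, hk2⟩
  · exact absurd (hk2 i hik) hi

lemma sum1_diff {p q : V d} (h : dist1 p q = 1) {i} (hi : p i ≠ q i) :
    sum1 q = sum1 p + (q i - p i) := by
  obtain ⟨_, hall⟩ := diff_at h hi
  have hsub : ∑ j, (q j - p j) = q i - p i := by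
    rw [Finset.sum_eq_single i]
    · intro j _ hj; rw [hall j hj]; ring
    · intro hj; exact absurd (Finset.mem_univ i) hj
  have : sum1 q - sum1 p = q i - p i := by
    unfold sum1; rw [← Finset.sum_sub_distrib]; exact hsub
  linarith

lemma abs_le_one_of_dist1 {p q : V d} (h : dist1 p q = 1) (i : Fin d) :
    |p i - q i| ≤ 1 := by
  have := Finset.single_le_sum (f := fun j => |p j - q j|) (fun j _ => abs_nonneg _)
    (Finset.mem_univ i)
  unfold dist1 at h; linarith

lemma mem_box_of_mem_Vset {p : V d} (hp : p ∈ Vset d n) : p ∈ box d n := by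
  rw [box, Fintype.mem_piFinset]
  intro i
  rw [Finset.mem_Icc]
  rcases hp with hp | hp
  · have := hp i; omega
  · obtain ⟨-, q, hq, hdq⟩ := hp
    have h1 := abs_le.mp (abs_le_one_of_dist1 hdq i)
    have := hq i
    omega

lemma bdry_struct {p : V d} (hp : p ∈ Bset d n) :
    ∃ i, (p i = 0 ∨ p i = (n:ℤ) + 1) ∧ ∀ j, j ≠ i → 1 ≤ p j ∧ p j ≤ (n:ℤ) := by
  obtain ⟨hpD, q, hq, hdq⟩ := hp
  have h0 : ∃ i, ¬(1 ≤ p i ∧ p i ≤ (n:ℤ)) := by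
    by_contra hc; push_neg at hc
    exact hpD fun i => by have := hc i; omega
  obtain ⟨i, hi⟩ := h0
  have hne : p i ≠ q i := fun he => by have := hq i; rw [he] at hi; omega
  obtain ⟨habs, hoth⟩ := diff_at hdq hne
  have hcase := abs_eq (by norm_num : (0:ℤ) ≤ 1) |>.mp habs
  have hqi := hq i
  refine ⟨i, by omega, fun j hj => by rw [hoth j hj]; exact hq j⟩

end Helpers

/-- factorization `T^{(t)} = T₂^{(t)} ∘ T₁^{(t)}` of the DtN submatrix,
stated relationally: if `u` solves the Dirichlet problem on `G` with boundary data
`φ` supported on `J_t^S`, and `w` solves the Dirichlet problem on the upper subgraph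
`G^{(t)}` with data `u|_{L_{t+1}}` on the interface and `0` on `∂D \ J_t^S`, then the
two boundary currents agree on `∂D \ J_t^S`. -/
theorem stmt4 (d n : ℕ) (hd : 2 ≤ d) (hn : 1 ≤ n)
    (γ : V d → V d → ℝ) (hγ : GoodCond d n γ)
    (t : ℤ) (ht1 : (d : ℤ) - 1 ≤ t) (ht2 : t ≤ (d : ℤ) * n - 1)
    (φ u w : V d → ℝ)
    (hφ : ∀ p, p ∉ JS d n t → φ p = 0)
    (hu : IsSol d n γ φ u)
    (hwsupp : ∀ p, p ∉ Vset d n \ (LS d n t ∪ JS d n t) → w p = 0)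
    (hwharm : ∀ p ∈ Dset d n \ LS d n (t + 1), lap d n γ w p = 0)
    (hwL : ∀ p ∈ L d n (t + 1), w p = u p)
    (hwB : ∀ p ∈ Bset d n \ JS d n t, w p = 0) :
    ∀ p ∈ Bset d n \ JS d n t, cur d n γ u p = cur d n γ w p := by
  obtain ⟨hγs, hγpos⟩ := hγ
  obtain ⟨huout, huharm, huB⟩ := hu
  set A : Set (V d) := {p | p ∈ Dset d n ∧ t + 2 ≤ sum1 p} with hAdef
  set vt : V d → ℝ := fun p => if p ∈ A then u p - w p else 0 with hvtdef
  -- vt agrees with u - w on neighbours of points of A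
  have hN : ∀ p ∈ A, ∀ q, Adj d n p q → vt q = u q - w q := by
    intro p hp q hAdj
    by_cases hqA : q ∈ A
    · simp [hvtdef, hqA]
    · rw [hvtdef]
      simp only [if_neg hqA]
      have hqV : q ∈ Vset d n := hAdj.2.2.1
      obtain ⟨i, hne⟩ : ∃ i, p i ≠ q i := by
        obtain ⟨i, hi1, -⟩ := exists_diff hAdj.1
        exact ⟨i, fun he => by rw [he] at hi1; simp at hi1⟩
      have hs := sum1_diff hAdj.1 hne
      have habs := abs_eq (by norm_num : (0:ℤ) ≤ 1) |>.mp (diff_at hAdj.1 hne).1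
      have hps : t + 2 ≤ sum1 p := hp.2
      have hqs : t + 1 ≤ sum1 q := by omega
      rcases hqV with hqD | hqB
      · -- q interior and not in A: q ∈ L (t+1)
        have hqs1 : sum1 q = t + 1 := by
          by_contra hc
          exact hqA ⟨hqD, by omega⟩
        rw [hwL q ⟨hqD, hqs1⟩]; ring
      · -- q boundary with sum1 ≥ t+1, not in JS
        have hqJ : q ∉ JS d n t := by
          rintro (⟨-, hle, -⟩ | ⟨-, hle, j, hj⟩)
          · omega
          · -- q j = n+1 forces sum1 q = sum1 p + 1 ≥ t + 3
            have hpj : p j ≠ q j := by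
              have := hp.1 j; omega
            have hq1 := abs_eq (by norm_num : (0:ℤ) ≤ 1) |>.mp (diff_at hAdj.1 hpj).1
            have hs' := sum1_diff hAdj.1 hpj
            have := (hp.1 j).2
            omega
        rw [huB q hqB, hφ q hqJ, hwB q ⟨hqB, hqJ⟩]; ring
  have hVbox : ∀ {p : V d}, p ∈ Vset d n → p ∈ box d n := fun h => mem_box_of_mem_Vset h
  -- vt is harmonic on A
  have hharm : ∀ p ∈ A, lap d n γ vt p = 0 := by
    intro p hp
    have hlin : lap d n γ vt p = lap d n γ u p - lap d n γ w p := by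
      unfold lap
      rw [← Finset.sum_sub_distrib]
      apply Finset.sum_congr rfl
      intro q hq
      have hAdj : Adj d n p q := (Finset.mem_filter.1 hq).2
      rw [hN p hp q hAdj]
      have : vt p = u p - w p := by simp [hvtdef, hp]
      rw [this]; ring
    have hpLS : p ∉ LS d n (t + 1) := fun hc => by have := hp.2; have := hc.2; omega
    rw [hlin, huharm p hp.1, hwharm p ⟨hp.1, hpLS⟩, sub_zero]
  -- energy argument
  set F : V d → V d → ℝ :=
    fun p q => if Adj d n p q then γ q p * (vt p * (vt q - vt p)) else 0 with hFdef
  set Q : V d → V d → ℝ :=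
    fun p q => if Adj d n p q then γ q p * (vt q - vt p)^2 else 0 with hQdef
  have hS : ∑ p ∈ box d n, ∑ q ∈ box d n, F p q = 0 := by
    apply Finset.sum_eq_zero; intro p hp
    by_cases hpA : p ∈ A
    · have hin : ∑ q ∈ box d n, F p q = vt p * lap d n γ vt p := by
        unfold lap
        rw [Finset.mul_sum, nbr, Finset.sum_filter]
        apply Finset.sum_congr rfl
        intro q hq
        by_cases h : Adj d n p q
        · simp only [hFdef, if_pos h]; ring
        · simp [hFdef, h]
      rw [hin, hharm p hpA, mul_zero]
    · apply Finset.sum_eq_zero; intro q hq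
      have hv : vt p = 0 := by simp [hvtdef, hpA]
      simp only [hFdef, hv]
      split <;> simp
  have hFQ : ∀ p q, F p q + F q p = -(Q p q) := by
    intro p q
    by_cases h : Adj d n p q
    · have h' : Adj d n q p := Adj_symm h
      simp only [hFdef, hQdef, if_pos h, if_pos h']
      rw [hγs p q]
      ring
    · have h' : ¬ Adj d n q p := fun hc => h (Adj_symm hc)
      simp [hFdef, hQdef, h, h']
  have hQ0 : ∑ p ∈ box d n, ∑ q ∈ box d n, Q p q = 0 := by
    have hswap : ∑ p ∈ box d n, ∑ q ∈ box d n, F q p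
        = ∑ p ∈ box d n, ∑ q ∈ box d n, F p q := Finset.sum_comm
    have e1 : ∀ p q, Q p q = -(F p q) - F q p := fun p q => by have := hFQ p q; linarith
    calc ∑ p ∈ box d n, ∑ q ∈ box d n, Q p q
        = ∑ p ∈ box d n, ∑ q ∈ box d n, (-(F p q) - F q p) := by
          apply Finset.sum_congr rfl; intro p _; apply Finset.sum_congr rfl; intro q _
          exact e1 p q
      _ = -(∑ p ∈ box d n, ∑ q ∈ box d n, F p q)
            - ∑ p ∈ box d n, ∑ q ∈ box d n, F q p := by
          simp [Finset.sum_sub_distrib]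
      _ = 0 := by rw [hswap, hS]; ring
  have hQnn : ∀ p q : V d, 0 ≤ Q p q := by
    intro p q
    simp only [hQdef]
    split
    · rename_i h
      have : 0 < γ q p := hγs q p ▸ hγpos p q h
      positivity
    · exact le_refl 0
  have hedge : ∀ p ∈ box d n, ∀ q ∈ box d n, Adj d n p q → vt q = vt p := by
    intro p hp q hq hAdj
    have h1 := (Finset.sum_eq_zero_iff_of_nonneg
      (fun p _ => Finset.sum_nonneg fun q _ => hQnn p q)).1 hQ0 p hp
    have h2 := (Finset.sum_eq_zero_iff_of_nonneg fun q _ => hQnn p q).1 h1 q hq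
    rw [hQdef] at h2
    simp only [if_pos hAdj] at h2
    have hpos : 0 < γ q p := hγs q p ▸ hγpos p q hAdj
    have := mul_eq_zero.mp h2
    rcases this with h | h
    · linarith
    · have := pow_eq_zero_iff (n := 2) (by norm_num) |>.mp h
      linarith [sub_eq_zero.mp this]
  -- descent
  have hdesc : ∀ m : ℕ, ∀ p, p ∈ A → sum1 p ≤ t + 1 + m → vt p = 0 := by
    intro m
    induction m with
    | zero => intro p hp hle; exfalso; have := hp.2; omega
    | succ m ih =>
      intro p hp hle
      have hpD : p ∈ Dset d n := hp.1
      have hd0 : 0 < d := by omega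
      set i0 : Fin d := ⟨0, hd0⟩ with hi0
      set q : V d := Function.update p i0 (p i0 - 1) with hqdef
      have hq_i : q i0 = p i0 - 1 := Function.update_self i0 _ p
      have hq_j : ∀ j, j ≠ i0 → q j = p j := fun j hj => Function.update_of_ne hj _ _
      have hdist : dist1 p q = 1 := by
        unfold dist1
        rw [Finset.sum_eq_single i0]
        · rw [hq_i]; simp
        · intro j _ hj; rw [hq_j j hj]; simp
        · intro hj; exact absurd (Finset.mem_univ i0) hj
      have hne : p i0 ≠ q i0 := by rw [hq_i]; omega
      have hsum1 : sum1 q = sum1 p - 1 := by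
        have := sum1_diff hdist hne
        rw [hq_i] at this; omega
      have hbound := hpD i0
      have hqV : q ∈ Vset d n := by
        by_cases h2 : 2 ≤ p i0
        · left; intro j
          rcases eq_or_ne j i0 with rfl | hj
          · rw [hq_i]; omega
          · rw [hq_j j hj]; exact hpD j
        · right
          have hpi : p i0 = 1 := by omega
          refine ⟨fun hD => ?_, p, hpD, by rw [dist1_comm]; exact hdist⟩
          have := (hD i0).1
          rw [hq_i, hpi] at this; omega
      have hAdj : Adj d n p q := ⟨hdist, Or.inl hpD, hqV, Or.inl hpD⟩
      have heq := hedge p (hVbox (Or.inl hpD)) q (hVbox hqV) hAdj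
      by_cases hqA : q ∈ A
      · rw [← heq]; exact ih q hqA (by omega)
      · rw [← heq]; simp [hvtdef, hqA]
  have hAzero : ∀ p ∈ A, u p = w p := by
    intro p hp
    have hb : sum1 p ≤ (d:ℤ) * n := by
      unfold sum1
      calc ∑ i, p i ≤ ∑ _i : Fin d, (n:ℤ) :=
            Finset.sum_le_sum fun i _ => (hp.1 i).2
        _ = d * n := by simp [mul_comm]
    have hz := hdesc (d * n) p hp (by push_cast; omega)
    rw [hvtdef] at hz
    simp only [if_pos hp] at hz
    linarith
  have hDeq : ∀ q ∈ Dset d n, t + 1 ≤ sum1 q → u q = w q := by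
    intro q hq hle
    rcases eq_or_lt_of_le hle with heq | hlt
    · exact (hwL q ⟨hq, heq.symm⟩).symm
    · exact hAzero q ⟨hq, by omega⟩
  -- final assembly
  intro p hp
  obtain ⟨hpB, hpJ⟩ := hp
  have hup : u p = 0 := by rw [huB p hpB, hφ p hpJ]
  have hwp : w p = 0 := hwB p ⟨hpB, hpJ⟩
  unfold cur
  apply Finset.sum_congr rfl
  intro q hq
  obtain ⟨hqnbr, hqD⟩ := Finset.mem_filter.1 hq
  have hAdj : Adj d n p q := (Finset.mem_filter.1 hqnbr).2
  suffices hqeq : u q = w q by rw [hqeq, hup, hwp]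
  obtain ⟨i, hbad, hgood⟩ := bdry_struct hpB
  have hdq : dist1 p q = 1 := hAdj.1
  have hqDi := hqD i
  have hne : p i ≠ q i := by omega
  obtain ⟨habs, hoth⟩ := diff_at hdq hne
  have hcase := abs_eq (by norm_num : (0:ℤ) ≤ 1) |>.mp habs
  have hs := sum1_diff hdq hne
  apply hDeq q hqD
  rcases hbad with h0 | hn1
  · have hps : t + 1 ≤ sum1 p := by
      by_contra hc; push_neg at hc
      exact hpJ (Or.inl ⟨hpB, by omega, ⟨i, h0⟩⟩)
    omega
  · have hps : t + 2 ≤ sum1 p := by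
      by_contra hc; push_neg at hc
      exact hpJ (Or.inr ⟨hpB, by omega, ⟨i, hn1⟩⟩)
    omega

end DiscreteCalderon
end
end

section
/- In the d-dimensional lattice graph, for d ≤ t ≤ dn−1, the kernel of T₁^{(t−1)} is contained in the kernel of T₁^{(t)}: if φ supported on J_{t−1}^S yields a γ-harmonic extension vanishing on L_t, then the zero-extension of φ to J_t^S yields a γ-harmonic extension vanishing on L_{t+1}. -/
noncomputable section
open Classical Finset

namespace DiscreteCalderon

lemma dist1_symm {d : ℕ} (p q : V d) : dist1 p q = dist1 q p := by
  unfold dist1; exact Finset.sum_congr rfl fun i _ => abs_sub_comm _ _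

lemma adj_symm {d n : ℕ} {p q : V d} (h : Adj d n p q) : Adj d n q p :=
  ⟨(dist1_symm q p).trans h.1, h.2.2.1, h.2.1, h.2.2.2.symm⟩

lemma coord_le {d : ℕ} {p q : V d} (h : dist1 p q = 1) (i : Fin d) : |p i - q i| ≤ 1 := by
  have h2 : |p i - q i| ≤ ∑ j, |p j - q j| :=
    Finset.single_le_sum (f := fun j => |p j - q j|) (fun j _ => abs_nonneg _) (Finset.mem_univ i)
  unfold dist1 at h
  rw [h] at h2
  exact h2

lemma sum1_sub {d : ℕ} (p q : V d) : sum1 p - sum1 q = ∑ i, (p i - q i) := by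
  unfold sum1; rw [Finset.sum_sub_distrib]

lemma sum1_close {d : ℕ} {p q : V d} (h : dist1 p q = 1) : |sum1 p - sum1 q| ≤ 1 := by
  rw [sum1_sub]
  calc |∑ i, (p i - q i)| ≤ ∑ i, |p i - q i| := Finset.abs_sum_le_sum_abs _ _
    _ = 1 := h

lemma sum1_of_lt {d : ℕ} {p q : V d} (h : dist1 p q = 1) {i : Fin d} (hlt : p i < q i) :
    sum1 p = sum1 q - 1 := by
  have hi : 1 ≤ |p i - q i| := by
    rw [abs_sub_comm, abs_of_nonneg (by omega)]; omega
  have hle := coord_le h i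
  have hsplit : |p i - q i| + ∑ j ∈ Finset.univ.erase i, |p j - q j| = ∑ j, |p j - q j| :=
    Finset.add_sum_erase _ (fun j => |p j - q j|) (Finset.mem_univ i)
  have hone : ∑ j, |p j - q j| = 1 := h
  have hnn : 0 ≤ ∑ j ∈ Finset.univ.erase i, |p j - q j| :=
    Finset.sum_nonneg fun j _ => abs_nonneg _
  have hrest : ∑ j ∈ Finset.univ.erase i, |p j - q j| = 0 := by omega
  have hzero : ∀ j ∈ Finset.univ.erase i, p j - q j = 0 := by
    intro j hj
    exact abs_eq_zero.mp
      ((Finset.sum_eq_zero_iff_of_nonneg (fun j _ => abs_nonneg (p j - q j))).mp hrest j hj)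
  have hpi : p i - q i = -1 := by
    have h1 : q i - p i ≤ 1 := by
      rw [abs_sub_comm, abs_of_nonneg (by omega)] at hle; exact hle
    omega
  have hs1 : sum1 p - sum1 q = ∑ j, (p j - q j) := sum1_sub p q
  have hs2 : (p i - q i) + ∑ j ∈ Finset.univ.erase i, (p j - q j) = ∑ j, (p j - q j) :=
    Finset.add_sum_erase _ (fun j => p j - q j) (Finset.mem_univ i)
  have hs3 : ∑ j ∈ Finset.univ.erase i, (p j - q j) = 0 := Finset.sum_eq_zero hzero
  omega

lemma mem_box_of_Vset {d n : ℕ} {p : V d} (hp : p ∈ Vset d n) : p ∈ box d n := by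
  rw [box, Fintype.mem_piFinset]
  intro i
  rw [Finset.mem_Icc]
  rcases hp with hD | hB
  · have := hD i; omega
  · obtain ⟨-, q, hq, hd1⟩ := hB
    have h1 := abs_le.mp (coord_le hd1 i)
    have h2 := hq i
    omega

/-- monotonicity of kernels, `ker T₁^{(t-1)} ⊆ ker T₁^{(t)}`:
if the harmonic extension of a boundary potential supported on `J_{t-1}^S`
vanishes on `L_t`, then it vanishes on `L_{t+1}`. -/
theorem stmt5 (d n : ℕ) (hd : 2 ≤ d) (hn : 1 ≤ n)
    (γ : V d → V d → ℝ) (hγ : GoodCond d n γ)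
    (t : ℤ) (ht1 : (d : ℤ) ≤ t) (ht2 : t ≤ (d : ℤ) * n - 1)
    (φ u : V d → ℝ)
    (hφ : ∀ p, p ∉ JS d n (t - 1) → φ p = 0)
    (hu : IsSol d n γ φ u)
    (hker : ∀ p ∈ L d n t, u p = 0) :
    ∀ p ∈ L d n (t + 1), u p = 0 := by
  classical
  -- the upper region S = {x ∈ D : t+1 ≤ sum1 x}
  set S : Set (V d) := {x | x ∈ Dset d n ∧ t + 1 ≤ sum1 x} with hSdef
  -- all neighbours of S outside S carry u = 0
  have hS : ∀ p q : V d, p ∈ S → Adj d n p q → q ∉ S → u q = 0 := by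
    intro p q hp hadj hq
    obtain ⟨hpD, hps⟩ := hp
    have hdist := hadj.1
    have hclose := abs_le.mp (sum1_close hdist)
    have hqs : t ≤ sum1 q := by omega
    rcases hadj.2.2.1 with hqD | hqB
    · -- interior neighbour: it lies on L_t, use hker
      have hqt : sum1 q = t := by
        by_contra hne
        exact hq ⟨hqD, by omega⟩
      exact hker q ⟨hqD, hqt⟩
    · -- boundary neighbour: φ vanishes there
      rw [hu.2.2 q hqB]
      apply hφ
      intro hJ
      rcases hJ with ⟨-, hle, -⟩ | ⟨-, hle, i, hni⟩
      · omega
      · -- q is on the plus boundary: its only interior neighbour has sum1 = sum1 q - 1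
        have hlt : p i < q i := by have := hpD i; omega
        have := sum1_of_lt hdist hlt
        omega
  -- the zero-extension of u to S
  set v : V d → ℝ := fun q => if q ∈ S then u q else 0 with hvdef
  have hveq : ∀ p ∈ S, v p = u p := fun p hp => if_pos hp
  have hv0 : ∀ p, p ∉ S → v p = 0 := fun p hp => if_neg hp
  -- v is γ-harmonic on S
  have hlapv : ∀ p ∈ S, lap d n γ v p = 0 := by
    intro p hp
    have h1 : lap d n γ v p = lap d n γ u p := by
      unfold lap
      apply Finset.sum_congr rfl
      intro q hq
      simp only [nbr, Finset.mem_filter] at hq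
      have hvq : v q = u q := by
        by_cases hqS : q ∈ S
        · exact if_pos hqS
        · rw [hv0 q hqS, hS p q hp hq.2 hqS]
      rw [hvq, hveq p hp]
    rw [h1]
    exact hu.2.1 p hp.1
  set B : Finset (V d) := box d n with hBdef
  -- the energy vanishes
  have hE : ∀ p ∈ B, (∑ q ∈ B, if Adj d n p q then γ q p * (v p * (v q - v p)) else 0) = 0 := by
    intro p _
    by_cases hp : p ∈ S
    · have h1 : (∑ q ∈ B, if Adj d n p q then γ q p * (v p * (v q - v p)) else 0)
          = v p * lap d n γ v p := by
        rw [lap, nbr, Finset.mul_sum, Finset.sum_filter]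
        apply Finset.sum_congr rfl
        intro q _
        by_cases h : Adj d n p q <;> simp [h] <;> ring
      rw [h1, hlapv p hp, mul_zero]
    · apply Finset.sum_eq_zero
      intro q _
      rw [hv0 p hp]
      by_cases h : Adj d n p q <;> simp [h]
  have hE0 : (∑ p ∈ B, ∑ q ∈ B, if Adj d n p q then γ q p * (v p * (v q - v p)) else 0) = 0 :=
    Finset.sum_eq_zero hE
  have hE0' : (∑ p ∈ B, ∑ q ∈ B, if Adj d n q p then γ p q * (v q * (v p - v q)) else 0) = 0 := by
    rw [Finset.sum_comm]
    exact hE0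
  -- the sum of squared edge differences vanishes
  have expand : ∀ p q : V d,
      (if Adj d n p q then γ q p * (v q - v p) ^ 2 else 0)
        = -(if Adj d n p q then γ q p * (v p * (v q - v p)) else 0)
          - (if Adj d n q p then γ p q * (v q * (v p - v q)) else 0) := by
    intro p q
    by_cases h : Adj d n p q
    · rw [if_pos h, if_pos h, if_pos (adj_symm h), hγ.1 p q]
      ring
    · rw [if_neg h, if_neg h, if_neg (fun h' => h (adj_symm h'))]
      ring
  have hQ : (∑ p ∈ B, ∑ q ∈ B, if Adj d n p q then γ q p * (v q - v p) ^ 2 else 0) = 0 := by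
    calc (∑ p ∈ B, ∑ q ∈ B, if Adj d n p q then γ q p * (v q - v p) ^ 2 else 0)
        = ∑ p ∈ B, ∑ q ∈ B,
            (-(if Adj d n p q then γ q p * (v p * (v q - v p)) else 0)
              - (if Adj d n q p then γ p q * (v q * (v p - v q)) else 0)) := by
          apply Finset.sum_congr rfl; intro p _
          apply Finset.sum_congr rfl; intro q _
          exact expand p q
      _ = -(∑ p ∈ B, ∑ q ∈ B, if Adj d n p q then γ q p * (v p * (v q - v p)) else 0)
          - (∑ p ∈ B, ∑ q ∈ B, if Adj d n q p then γ p q * (v q * (v p - v q)) else 0) := by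
          simp only [Finset.sum_sub_distrib, Finset.sum_neg_distrib]
      _ = 0 := by rw [hE0, hE0']; ring
  -- each edge term vanishes
  have hterm : ∀ p ∈ B, ∀ q ∈ B,
      (if Adj d n p q then γ q p * (v q - v p) ^ 2 else 0) = 0 := by
    have hnn : ∀ p q : V d, 0 ≤ (if Adj d n p q then γ q p * (v q - v p) ^ 2 else 0) := by
      intro p q
      by_cases h : Adj d n p q
      · rw [if_pos h]
        exact mul_nonneg (le_of_lt (hγ.2 q p (adj_symm h))) (sq_nonneg _)
      · rw [if_neg h]
    intro p hp q hq
    have h1 := (Finset.sum_eq_zero_iff_of_nonneg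
      (fun p _ => Finset.sum_nonneg fun q _ => hnn p q)).mp hQ p hp
    exact (Finset.sum_eq_zero_iff_of_nonneg (fun q _ => hnn p q)).mp h1 q hq
  -- conclude on L_{t+1}
  intro p hp
  obtain ⟨hpD, hpsum⟩ := hp
  have hex : ∃ i, 2 ≤ p i := by
    by_contra hcon
    push_neg at hcon
    have hle : sum1 p ≤ (d : ℤ) := by
      unfold sum1
      calc ∑ i, p i ≤ ∑ _i : Fin d, (1 : ℤ) :=
            Finset.sum_le_sum (fun i _ => by have := hcon i; omega)
        _ = d := by simp
    omega
  obtain ⟨i, hi⟩ := hex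
  set q : V d := Function.update p i (p i - 1) with hqdef
  have hqi : q i = p i - 1 := Function.update_self i _ p
  have hqj : ∀ j, j ≠ i → q j = p j := fun j hj => Function.update_of_ne hj _ p
  have hqD : q ∈ Dset d n := by
    intro j
    by_cases hj : j = i
    · subst hj; rw [hqi]; have := hpD j; omega
    · rw [hqj j hj]; exact hpD j
  have hdq : dist1 p q = 1 := by
    unfold dist1
    rw [Finset.sum_eq_single i]
    · rw [hqi]; simp
    · intro j _ hj; rw [hqj j hj]; simp
    · intro h; exact absurd (Finset.mem_univ i) h
  have hsq : sum1 q = t := by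
    have hlt : q i < p i := by rw [hqi]; omega
    have := sum1_of_lt ((dist1_symm q p).trans hdq) hlt
    omega
  have hAdj : Adj d n p q := ⟨hdq, Or.inl hpD, Or.inl hqD, Or.inl hpD⟩
  have hpB : p ∈ B := mem_box_of_Vset (Or.inl hpD)
  have hqB : q ∈ B := mem_box_of_Vset (Or.inl hqD)
  have hterm' := hterm p hpB q hqB
  rw [if_pos hAdj] at hterm'
  have hγpos : (0 : ℝ) < γ q p := hγ.2 q p (adj_symm hAdj)
  have hsq0 : (v q - v p) ^ 2 = 0 := by
    rcases mul_eq_zero.mp hterm' with h | h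
    · exact absurd h (ne_of_gt hγpos)
    · exact h
  have hvqp : v q = v p := by
    have := pow_eq_zero_iff (n := 2) (by norm_num) |>.mp hsq0
    linarith [sub_eq_zero.mp this]
  have hvq : v q = 0 := hv0 q (fun hqS => by have := hqS.2; omega)
  have hvp : v p = u p := hveq p ⟨hpD, by omega⟩
  rw [← hvp, ← hvqp, hvq]

end DiscreteCalderon
end
end
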